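/- Let (T,*,[[·,·,·]],b) be a quadratic left Bol algebra over ℝ and let l(u)(v) := u*v, R(u,v)(w) := [[w,u,v]], L(u,v)(w) := [[u,v,w]] be the maps of the adjoint representation. On the dual space T*, define l'(x)(f) := -f∘l(x), R'(x,y)(f) := f∘R(y,x), and L'(x,y)(f) := -f∘L(x,y) for f ∈ T*. Then (T*, l', R', L') is a representation of T, i.e. (ρ,θ,D_θ) = (l',R',L') satisfies (R1), (R21), (R22), (R31), (R32), (R33); it is called the coadjoint representation of (T,b). -/
import Mathlib


/-- A left Bol algebra over ℝ: a real vector space with a bilinear operation `mul`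
and a trilinear operation `tri` satisfying (T01), (T02), (T1), (T2) and (T3). -/
structure LeftBolAlgebra (T : Type*) [AddCommGroup T] [Module ℝ T] where
  mul : T →ₗ[ℝ] T →ₗ[ℝ] T
  tri : T →ₗ[ℝ] T →ₗ[ℝ] T →ₗ[ℝ] T
  mul_anticomm : ∀ x y : T, mul x y = - mul y x
  tri_skew : ∀ x y z : T, tri x y z = - tri y x z
  tri_cyclic : ∀ x y z : T, tri x y z + tri y z x + tri z x y = 0
  tri_leibniz : ∀ u v x y z : T,
    tri u v (tri x y z) = tri (tri u v x) y z + tri x (tri u v y) z + tri x y (tri u v z)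
  bol : ∀ u v x y : T, tri u v (mul x y) =
    mul (tri u v x) y + mul x (tri u v y) + tri x y (mul u v) - mul (mul x y) (mul u v)

variable {T : Type*} [AddCommGroup T] [Module ℝ T]

/-- The adjoint map R(u,v) : w ↦ [[w,u,v]]. -/
def LeftBolAlgebra.Rmap (A : LeftBolAlgebra T) (u v : T) : T →ₗ[ℝ] T where
  toFun w := A.tri w u v
  map_add' a c := by simp
  map_smul' r a := by simp

/-- The coadjoint map l'(x) : T* → T*, l'(x)(f) = -f ∘ l(x), where l(x)(v) = x*v. -/
def LeftBolAlgebra.coadL (A : LeftBolAlgebra T) (x : T) :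
    Module.End ℝ (Module.Dual ℝ T) :=
  - (A.mul x).dualMap

/-- The coadjoint map R'(x,y) : T* → T*, R'(x,y)(f) = f ∘ R(y,x). -/
def LeftBolAlgebra.coadTheta (A : LeftBolAlgebra T) (x y : T) :
    Module.End ℝ (Module.Dual ℝ T) :=
  (A.Rmap y x).dualMap

/-- The coadjoint map L'(x,y) : T* → T*, L'(x,y)(f) = -f ∘ L(x,y), where
L(x,y)(w) = [[x,y,w]]. -/
def LeftBolAlgebra.coadD (A : LeftBolAlgebra T) (x y : T) :
    Module.End ℝ (Module.Dual ℝ T) :=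
  - (A.tri x y).dualMap

/-- Let (T,*,[[·,·,·]],b) be a quadratic left Bol algebra.  Then the triple
(l', R', L') on the dual space T*, given by l'(x)(f) = -f∘l(x), R'(x,y)(f) = f∘R(y,x),
L'(x,y)(f) = -f∘L(x,y), is a representation of T (the coadjoint representation),
i.e. it satisfies (R1), (R21), (R22), (R31), (R32), (R33). -/
theorem coadjoint_representation
    (A : LeftBolAlgebra T) (b : LinearMap.BilinForm ℝ T)
    (hsymm : ∀ x y : T, b x y = b y x)
    (hnondeg : ∀ x : T, (∀ y : T, b x y = 0) → x = 0)
    (hassoc : ∀ x y z : T, b (A.mul x y) z = b x (A.mul y z))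
    (hinv : ∀ x y z u : T, b (A.tri x y z) u = b (A.tri z u x) y) :
    (∀ x y : T, A.coadD x y + A.coadTheta x y - A.coadTheta y x = 0) ∧
    (∀ x y z : T, A.coadD x y * A.coadL z - A.coadL z * A.coadD x y =
      A.coadL (A.tri x y z) + A.coadL (A.mul x y) * A.coadL z -
        A.coadTheta z (A.mul x y)) ∧
    (∀ x y z : T, A.coadTheta x (A.mul y z) =
      A.coadL y * A.coadTheta x z - A.coadL z * A.coadTheta x y -
        (A.coadD y z - A.coadL (A.mul y z)) * A.coadL x) ∧
    (∀ u v x y : T, A.coadD u v * A.coadD x y - A.coadD x y * A.coadD u v =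
      A.coadD (A.tri u v x) y + A.coadD x (A.tri u v y)) ∧
    (∀ u v x y : T, A.coadD u v * A.coadTheta x y - A.coadTheta x y * A.coadD u v =
      A.coadTheta (A.tri u v x) y + A.coadTheta x (A.tri u v y)) ∧
    (∀ u x y z : T, A.coadTheta u (A.tri x y z) =
      A.coadTheta y z * A.coadTheta u x - A.coadTheta x z * A.coadTheta u y +
        A.coadD x y * A.coadTheta u z) := by
  have h1 : ∀ p u s : T, b (A.mul p u) s = - b u (A.mul p s) := by
    intro p u s
    rw [A.mul_anticomm p u, map_neg, LinearMap.neg_apply, hassoc u p s]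
  have h3 : ∀ x y u s : T, b (A.tri x y u) s = - b u (A.tri x y s) := by
    intro x y u s
    rw [hinv x y u s, hsymm u (A.tri x y s), hinv x y s u, A.tri_skew s u x, map_neg,
      LinearMap.neg_apply, neg_neg]
  have h2 : ∀ x y u s : T, b (A.tri u y x) s = b u (A.tri s x y) := by
    intro x y u s
    rw [hsymm u (A.tri s x y), hinv s x y u, A.tri_skew y u s, map_neg, LinearMap.neg_apply,
      hinv u y s x, hinv u y x s, A.tri_skew s x u, map_neg, LinearMap.neg_apply, neg_neg]
  refine ⟨?_, ?_, ?_, ?_, ?_, ?_⟩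
  · -- (R1)
    intro x y
    have key : ∀ w : T, -A.tri x y w + A.tri w y x - A.tri w x y = 0 := by
      intro w
      have hc := A.tri_cyclic x y w
      rw [A.tri_skew y w x] at hc
      linear_combination (norm := abel) -hc
    apply LinearMap.ext; intro φ; apply LinearMap.ext; intro w
    simp only [LeftBolAlgebra.coadD, LeftBolAlgebra.coadL, LeftBolAlgebra.coadTheta,
      LeftBolAlgebra.Rmap, LinearMap.dualMap_apply, Module.End.mul_apply, LinearMap.add_apply,
      LinearMap.sub_apply, LinearMap.neg_apply, LinearMap.zero_apply, LinearMap.coe_mk,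
      AddHom.coe_mk, map_neg]
    have h := congrArg φ (key w)
    simp only [map_add, map_sub, map_neg, map_zero] at h
    linarith
  · -- (R21)
    intro x y z
    have keyE : ∀ t : T, A.tri x y (A.mul z t) - A.mul z (A.tri x y t)
        - A.mul (A.tri x y z) t - A.mul (A.mul x y) (A.mul z t) + A.tri t z (A.mul x y) = 0 := by
      intro t
      have hb := A.bol x y z t
      rw [A.tri_skew z t (A.mul x y), A.mul_anticomm (A.mul z t) (A.mul x y)] at hb
      linear_combination (norm := abel) hb
    have key : ∀ w : T, A.mul z (A.tri x y w) - A.tri x y (A.mul z w)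
        + A.mul (A.tri x y z) w - A.mul z (A.mul (A.mul x y) w) + A.tri w (A.mul x y) z = 0 := by
      intro w
      apply hnondeg; intro t
      simp only [map_add, map_sub, LinearMap.add_apply, LinearMap.sub_apply]
      rw [h1 z (A.tri x y w) t, h3 x y w (A.mul z t),
          h3 x y (A.mul z w) t, h1 z w (A.tri x y t),
          h1 (A.tri x y z) w t,
          h1 z (A.mul (A.mul x y) w) t, h1 (A.mul x y) w (A.mul z t),
          h2 z (A.mul x y) w t]
      have hc := congrArg (b w) (keyE t)
      simp only [map_add, map_sub, map_neg, map_zero, LinearMap.add_apply, LinearMap.sub_apply,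
        LinearMap.neg_apply, LinearMap.zero_apply] at hc
      linarith
    apply LinearMap.ext; intro φ; apply LinearMap.ext; intro w
    simp only [LeftBolAlgebra.coadD, LeftBolAlgebra.coadL, LeftBolAlgebra.coadTheta,
      LeftBolAlgebra.Rmap, LinearMap.dualMap_apply, Module.End.mul_apply, LinearMap.add_apply,
      LinearMap.sub_apply, LinearMap.neg_apply, LinearMap.zero_apply, LinearMap.coe_mk,
      AddHom.coe_mk, map_neg]
    have h := congrArg φ (key w)
    simp only [map_add, map_sub, map_neg, map_zero] at h
    linarith
  · -- (R22)
    intro x y z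
    have keyE : ∀ t : T, A.tri t x (A.mul y z) - A.mul y (A.tri t x z) + A.mul z (A.tri t x y)
        + A.tri y z (A.mul x t) - A.mul (A.mul y z) (A.mul x t) = 0 := by
      intro t
      have hb := A.bol t x y z
      rw [A.mul_anticomm (A.tri t x y) z, A.mul_anticomm t x, map_neg, map_neg] at hb
      linear_combination (norm := abel) hb
    have key : ∀ w : T, A.tri w (A.mul y z) x + A.tri (A.mul y w) z x - A.tri (A.mul z w) y x
        + A.mul x (A.tri y z w) - A.mul x (A.mul (A.mul y z) w) = 0 := by
      intro w
      apply hnondeg; intro t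
      simp only [map_add, map_sub, LinearMap.add_apply, LinearMap.sub_apply]
      rw [h2 x (A.mul y z) w t,
          h2 x z (A.mul y w) t, h1 y w (A.tri t x z),
          h2 x y (A.mul z w) t, h1 z w (A.tri t x y),
          h1 x (A.tri y z w) t, h3 y z w (A.mul x t),
          h1 x (A.mul (A.mul y z) w) t, h1 (A.mul y z) w (A.mul x t)]
      have hc := congrArg (b w) (keyE t)
      simp only [map_add, map_sub, map_neg, map_zero, LinearMap.add_apply, LinearMap.sub_apply,
        LinearMap.neg_apply, LinearMap.zero_apply] at hc
      linarith
    apply LinearMap.ext; intro φ; apply LinearMap.ext; intro w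
    simp only [LeftBolAlgebra.coadD, LeftBolAlgebra.coadL, LeftBolAlgebra.coadTheta,
      LeftBolAlgebra.Rmap, LinearMap.dualMap_apply, Module.End.mul_apply, LinearMap.add_apply,
      LinearMap.sub_apply, LinearMap.neg_apply, LinearMap.zero_apply, LinearMap.coe_mk,
      AddHom.coe_mk, map_neg]
    have h := congrArg φ (key w)
    simp only [map_add, map_sub, map_neg, map_zero] at h
    linarith
  · -- (R31)
    intro u v x y
    have key : ∀ w : T, A.tri x y (A.tri u v w) - A.tri u v (A.tri x y w)
        + A.tri (A.tri u v x) y w + A.tri x (A.tri u v y) w = 0 := by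
      intro w
      have hl := A.tri_leibniz u v x y w
      linear_combination (norm := abel) -hl
    apply LinearMap.ext; intro φ; apply LinearMap.ext; intro w
    simp only [LeftBolAlgebra.coadD, LeftBolAlgebra.coadL, LeftBolAlgebra.coadTheta,
      LeftBolAlgebra.Rmap, LinearMap.dualMap_apply, Module.End.mul_apply, LinearMap.add_apply,
      LinearMap.sub_apply, LinearMap.neg_apply, LinearMap.zero_apply, LinearMap.coe_mk,
      AddHom.coe_mk, map_neg]
    have h := congrArg φ (key w)
    simp only [map_add, map_sub, map_neg, map_zero] at h
    linarith
  · -- (R32)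
    intro u v x y
    have key : ∀ w : T, -A.tri (A.tri u v w) y x + A.tri u v (A.tri w y x)
        - A.tri w y (A.tri u v x) - A.tri w (A.tri u v y) x = 0 := by
      intro w
      have hl := A.tri_leibniz u v w y x
      linear_combination (norm := abel) hl
    apply LinearMap.ext; intro φ; apply LinearMap.ext; intro w
    simp only [LeftBolAlgebra.coadD, LeftBolAlgebra.coadL, LeftBolAlgebra.coadTheta,
      LeftBolAlgebra.Rmap, LinearMap.dualMap_apply, Module.End.mul_apply, LinearMap.add_apply,
      LinearMap.sub_apply, LinearMap.neg_apply, LinearMap.zero_apply, LinearMap.coe_mk,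
      AddHom.coe_mk, map_neg]
    have h := congrArg φ (key w)
    simp only [map_add, map_sub, map_neg, map_zero] at h
    linarith
  · -- (R33)
    intro u x y z
    have keyE : ∀ t : T, A.tri t u (A.tri x y z) - A.tri (A.tri t u x) y z
        + A.tri (A.tri t u y) x z - A.tri x y (A.tri t u z) = 0 := by
      intro t
      have hl := A.tri_leibniz t u x y z
      rw [A.tri_skew x (A.tri t u y) z] at hl
      linear_combination (norm := abel) hl
    have key : ∀ w : T, A.tri w (A.tri x y z) u - A.tri (A.tri w z y) x u
        + A.tri (A.tri w z x) y u + A.tri (A.tri x y w) z u = 0 := by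
      intro w
      apply hnondeg; intro t
      simp only [map_add, map_sub, LinearMap.add_apply, LinearMap.sub_apply]
      rw [h2 u (A.tri x y z) w t,
          h2 u x (A.tri w z y) t, h2 y z w (A.tri t u x),
          h2 u y (A.tri w z x) t, h2 x z w (A.tri t u y),
          h2 u z (A.tri x y w) t, h3 x y w (A.tri t u z)]
      have hc := congrArg (b w) (keyE t)
      simp only [map_add, map_sub, map_neg, map_zero, LinearMap.add_apply, LinearMap.sub_apply,
        LinearMap.neg_apply, LinearMap.zero_apply] at hc
      linarith
    apply LinearMap.ext; intro φ; apply LinearMap.ext; intro w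
    simp only [LeftBolAlgebra.coadD, LeftBolAlgebra.coadL, LeftBolAlgebra.coadTheta,
      LeftBolAlgebra.Rmap, LinearMap.dualMap_apply, Module.End.mul_apply, LinearMap.add_apply,
      LinearMap.sub_apply, LinearMap.neg_apply, LinearMap.zero_apply, LinearMap.coe_mk,
      AddHom.coe_mk, map_neg]
    have h := congrArg φ (key w)
    simp only [map_add, map_sub, map_neg, map_zero] at h
    linarith
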